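/- Let q : [0,h] → ℝ be continuously differentiable with q(0) = 0 and q(h) = 0. Then ∫₀ʰ |q(t)| dt ≤ (h/2) ∫₀ʰ |q'(t)| dt. -/
import Mathlib


theorem stmt_1 (h : ℝ) (hh : 0 < h) (q q' : ℝ → ℝ)
    (hderiv : ∀ t ∈ Set.Icc 0 h, HasDerivAt q (q' t) t)
    (hcont : ContinuousOn q' (Set.Icc 0 h))
    (h0 : q 0 = 0) (hh0 : q h = 0) :
    (∫ t in (0:ℝ)..h, |q t|) ≤ (h / 2) * ∫ t in (0:ℝ)..h, |q' t| := by
  have hle : (0:ℝ) ≤ h := hh.le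
  have hq'int : ∀ a b : ℝ, a ∈ Set.Icc (0:ℝ) h → b ∈ Set.Icc (0:ℝ) h →
      IntervalIntegrable q' MeasureTheory.volume a b := fun a b ha hb =>
    (hcont.mono (Set.uIcc_subset_Icc ha hb)).intervalIntegrable
  have habscont : ContinuousOn (fun s => |q' s|) (Set.Icc 0 h) := hcont.abs
  have habsint : ∀ a b : ℝ, a ∈ Set.Icc (0:ℝ) h → b ∈ Set.Icc (0:ℝ) h →
      IntervalIntegrable (fun s => |q' s|) MeasureTheory.volume a b := fun a b ha hb =>
    (habscont.mono (Set.uIcc_subset_Icc ha hb)).intervalIntegrable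
  have key : ∀ t ∈ Set.Icc (0:ℝ) h, |q t| ≤ (1/2) * ∫ s in (0:ℝ)..h, |q' s| := by
    intro t ht
    obtain ⟨ht0, hth⟩ := ht
    have h1 : ∫ s in (0:ℝ)..t, q' s = q t - q 0 := by
      apply intervalIntegral.integral_eq_sub_of_hasDerivAt
      · intro s hs
        rw [Set.uIcc_of_le ht0] at hs
        exact hderiv s ⟨hs.1, hs.2.trans hth⟩
      · exact hq'int 0 t ⟨le_rfl, hle⟩ ⟨ht0, hth⟩
    have h2 : ∫ s in t..h, q' s = q h - q t := by
      apply intervalIntegral.integral_eq_sub_of_hasDerivAt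
      · intro s hs
        rw [Set.uIcc_of_le hth] at hs
        exact hderiv s ⟨ht0.trans hs.1, hs.2⟩
      · exact hq'int t h ⟨ht0, hth⟩ ⟨hle, le_rfl⟩
    have b1 : |q t| ≤ ∫ s in (0:ℝ)..t, |q' s| := by
      rw [h0, sub_zero] at h1
      calc |q t| = |∫ s in (0:ℝ)..t, q' s| := by rw [h1]
        _ ≤ ∫ s in (0:ℝ)..t, |q' s| :=
          intervalIntegral.abs_integral_le_integral_abs ht0
    have b2 : |q t| ≤ ∫ s in t..h, |q' s| := by
      rw [hh0, zero_sub] at h2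
      calc |q t| = |∫ s in t..h, q' s| := by rw [h2, abs_neg]
        _ ≤ ∫ s in t..h, |q' s| :=
          intervalIntegral.abs_integral_le_integral_abs hth
    have hsum : (∫ s in (0:ℝ)..t, |q' s|) + (∫ s in t..h, |q' s|)
        = ∫ s in (0:ℝ)..h, |q' s| :=
      intervalIntegral.integral_add_adjacent_intervals
        (habsint 0 t ⟨le_rfl, hle⟩ ⟨ht0, hth⟩) (habsint t h ⟨ht0, hth⟩ ⟨hle, le_rfl⟩)
    linarith
  have hqc : ContinuousOn q (Set.Icc 0 h) :=
    fun t ht => ((hderiv t ht).continuousAt).continuousWithinAt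
  have hqcont : ContinuousOn (fun t => |q t|) (Set.Icc 0 h) := hqc.abs
  have hqint : IntervalIntegrable (fun t => |q t|) MeasureTheory.volume 0 h :=
    (hqcont.mono (by rw [Set.uIcc_of_le hle])).intervalIntegrable
  calc (∫ t in (0:ℝ)..h, |q t|)
      ≤ ∫ _ in (0:ℝ)..h, (1/2) * ∫ s in (0:ℝ)..h, |q' s| := by
        apply intervalIntegral.integral_mono_on hle hqint intervalIntegrable_const
        intro t ht; exact key t ht
    _ = (h / 2) * ∫ t in (0:ℝ)..h, |q' t| := by
        rw [intervalIntegral.integral_const, smul_eq_mul]; ring
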